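/- Let p, q : ℝⁿ → ℝ be measurable with 1 < p⁻ ≤ p(x) ≤ p⁺ < ∞ and 0 ≤ q(x) ≤ q⁺ < ∞. Then there is a constant C > 0, depending only on p⁻, p⁺ and q⁺, such that for every cube Q ⊂ ℝⁿ and every t ≥ 0: t ≤ C · (⨍_Q φ^{-1}_{p(x), q(x)}(t) dx) · (⨍_Q (log(e + t))^{q(x)} φ^{-1}_{p'(x), q(x)}(t) dx), where p'(x) = p(x)/(p(x) − 1). -/

import Mathlib

open MeasureTheory ENNReal NNReal Set

noncomputable section

abbrev Rn (n : ℕ) := EuclideanSpace ℝ (Fin n)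

namespace VarExp

variable {n : ℕ}

/-- Closed axis-parallel cube with center `c` and sidelength `l`. -/
def cubeSet (c : Rn n) (l : ℝ) : Set (Rn n) := {x | ∀ i, |x i - c i| ≤ l / 2}

/-- Characteristic function of a set. -/
def chi (s : Set (Rn n)) : Rn n → ℝ := s.indicator fun _ => 1

/-- Average of `b` over the cube with center `c` and sidelength `l`. -/
def cavg (c : Rn n) (l : ℝ) (b : Rn n → ℝ) : ℝ := ⨍ x in cubeSet c l, b x

/-- Global log-Hölder continuity with explicit constants. -/
def LogHolderWith (p : Rn n → ℝ) (C pinf : ℝ) : Prop :=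
  (∀ x y : Rn n, |p x - p y| ≤ C / Real.log (Real.exp 1 + 1 / ‖x - y‖)) ∧
  (∀ x : Rn n, |p x - pinf| ≤ C / Real.log (Real.exp 1 + ‖x‖))

/-- Global log-Hölder continuity (the class `P^log`). -/
def LogHolder (p : Rn n → ℝ) : Prop := ∃ C pinf : ℝ, 0 < C ∧ LogHolderWith p C pinf

/-- The class `P^loglog`: bounded and loglog-Hölder continuous. -/
def LogLogHolder (q : Rn n → ℝ) : Prop :=
  (∃ M : ℝ, ∀ x, |q x| ≤ M) ∧
  ∃ C : ℝ, 0 < C ∧ ∀ x y : Rn n,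
    |q x - q y| ≤ C / Real.log (Real.exp 1 + Real.log (Real.exp 1 + 1 / ‖x - y‖))

/-- Pointwise conjugate exponent. -/
def conj (t : ℝ) : ℝ := t / (t - 1)

/-- Luxemburg norm (with values in `ℝ≥0∞`) of an `ℝ≥0∞`-valued function for a
variable exponent `p`. -/
def vnormE (p : Rn n → ℝ) (f : Rn n → ℝ≥0∞) : ℝ≥0∞ :=
  sInf {lam : ℝ≥0∞ | ∃ l : ℝ, 0 < l ∧ lam = ENNReal.ofReal l ∧
    ∫⁻ x, (f x / ENNReal.ofReal l) ^ p x ≤ 1}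

/-- Variable exponent Lebesgue (Luxemburg) norm. -/
def vnorm (p : Rn n → ℝ) (f : Rn n → ℝ) : ℝ≥0∞ :=
  vnormE p fun x => ENNReal.ofReal |f x|

/-- `φ_p(x,t)` for an extended exponent : `t^p` if `p < ∞`, and `∞·χ_{(1,∞)}(t)` if `p = ∞`. -/
def phiExp (pe : ℝ≥0∞) (t : ℝ≥0∞) : ℝ≥0∞ :=
  if pe = ⊤ then (if t ≤ 1 then 0 else ⊤) else t ^ pe.toReal

/-- Luxemburg norm for an extended (possibly infinite) variable exponent. -/
def vnormX (p : Rn n → ℝ≥0∞) (f : Rn n → ℝ) : ℝ≥0∞ :=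
  sInf {lam : ℝ≥0∞ | ∃ l : ℝ, 0 < l ∧ lam = ENNReal.ofReal l ∧
    ∫⁻ x, phiExp (p x) (ENNReal.ofReal (|f x| / l)) ≤ 1}

/-- The Musielak–Orlicz norm of the space `L^{p(·)}(log L)^{q(·)}`. -/
def llognorm (p q : Rn n → ℝ) (f : Rn n → ℝ) : ℝ≥0∞ :=
  sInf {lam : ℝ≥0∞ | ∃ l : ℝ, 0 < l ∧ lam = ENNReal.ofReal l ∧
    ∫⁻ x, ENNReal.ofReal ((|f x| / l) ^ p x *
      Real.log (Real.exp 1 + |f x| / l) ^ q x) ≤ 1}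

/-- Generalized Φ-function. -/
def IsGPhi (Ψ : Rn n → ℝ → ℝ≥0∞) : Prop :=
  (∀ t : ℝ, Measurable fun x => Ψ x t) ∧
  (∀ x, ConvexOn ℝ≥0 (Ici (0:ℝ)) (Ψ x)) ∧
  (∀ x, Ψ x 0 = 0) ∧
  (∀ x, Filter.Tendsto (Ψ x) (nhdsWithin 0 (Ioi 0)) (nhds 0)) ∧
  (∀ x, Filter.Tendsto (Ψ x) Filter.atTop (nhds ⊤))

/-- Luxemburg norm associated to a generalized Φ-function. -/
def gnorm (Ψ : Rn n → ℝ → ℝ≥0∞) (f : Rn n → ℝ) : ℝ≥0∞ :=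
  sInf {lam : ℝ≥0∞ | ∃ l : ℝ, 0 < l ∧ lam = ENNReal.ofReal l ∧
    ∫⁻ x, Ψ x (|f x| / l) ≤ 1}

/-- Generalized inverse of a generalized Φ-function. -/
def ginv (Ψ : Rn n → ℝ → ℝ≥0∞) (x : Rn n) (t : ℝ≥0∞) : ℝ :=
  sInf {u : ℝ | 0 ≤ u ∧ t ≤ Ψ x u}

/-- Conjugate (Legendre transform) of a generalized Φ-function. -/
def gconj (Ψ : Rn n → ℝ → ℝ≥0∞) (x : Rn n) (u : ℝ) : ℝ≥0∞ :=
  ⨆ t : Ici (0:ℝ), ENNReal.ofReal (t.1 * u) - Ψ x t.1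

/-- Condition 𝓕 on a triple of generalized Φ-functions. -/
def CondF (A B D : Rn n → ℝ → ℝ≥0∞) : Prop :=
  ∃ C : ℝ, 0 < C ∧
    (∀ (c : Rn n) (l : ℝ), 0 < l →
      gnorm A (chi (cubeSet c l)) * gnorm B (chi (cubeSet c l)) ≤
        ENNReal.ofReal C * gnorm D (chi (cubeSet c l))) ∧
    (∀ (x : Rn n) (t : ℝ≥0∞), ginv A x t * ginv B x t ≤ C * ginv D x t) ∧
    (∀ (c : Rn n) (l : ℝ), 0 < l →
      gnorm D (chi (cubeSet c l)) * gnorm (gconj D) (chi (cubeSet c l)) ≤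
        ENNReal.ofReal (C * l ^ n))

/-- Maximal operator associated to a generalized Φ-function. -/
def gmax (Ψ : Rn n → ℝ → ℝ≥0∞) (f : Rn n → ℝ) (x : Rn n) : ℝ≥0∞ :=
  ⨆ (c : Rn n) (l : ℝ) (_ : 0 < l) (_ : x ∈ cubeSet c l),
    gnorm Ψ ((cubeSet c l).indicator f) / gnorm Ψ (chi (cubeSet c l))

/-- Fractional maximal operator associated to a generalized Φ-function, where the
fractional exponent `β` is allowed to take the value `∞`. -/
def gmaxFrac (β : Rn n → ℝ≥0∞) (Ψ : Rn n → ℝ → ℝ≥0∞) (f : Rn n → ℝ) (x : Rn n) : ℝ≥0∞ :=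
  ⨆ (c : Rn n) (l : ℝ) (_ : 0 < l) (_ : x ∈ cubeSet c l),
    vnormX β (chi (cubeSet c l)) *
      gnorm Ψ ((cubeSet c l).indicator f) / gnorm Ψ (chi (cubeSet c l))

/-- `φ_{a,b}(t) = t^a (log(e+t))^b`. -/
def phiab (a b t : ℝ) : ℝ := t ^ a * Real.log (Real.exp 1 + t) ^ b

/-- Generalized inverse of `φ_{a,b}`. -/
def phiInv (a b s : ℝ) : ℝ := sInf {u : ℝ | 0 ≤ u ∧ s ≤ phiab a b u}

/-- The annulus `{x : r < ‖x‖ ≤ R}`. -/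
def annulus (r R : ℝ) : Set (Rn n) := {x | r < ‖x‖ ∧ ‖x‖ ≤ R}

/-- `K̄(t) = ess sup_{t<|x|≤2t} K(x)`. -/
def Kbar (K : Rn n → ℝ) (t : ℝ) : ℝ≥0∞ :=
  essSup (fun x => ENNReal.ofReal (K x)) (volume.restrict (annulus t (2 * t)))

/-- `K̃(t) = ∫_{|z|≤t} K(z) dz`. -/
def Ktilde (K : Rn n → ℝ) (t : ℝ) : ℝ :=
  ∫ z in {z : Rn n | ‖z‖ ≤ t}, K z

/-- The class 𝔇 of kernels, with explicit parameters `c`, `δ`, `ε`. -/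
def ClassDWith (K : Rn n → ℝ) (c δ ε : ℝ) : Prop :=
  LocallyIntegrable K ∧ (∀ x, 0 ≤ K x) ∧
  0 < c ∧ 0 < δ ∧ 0 ≤ ε ∧ ε < 1 ∧
  ∀ k : ℤ,
    essSup (fun x => ENNReal.ofReal (K x))
        (volume.restrict (annulus ((2:ℝ) ^ k) ((2:ℝ) ^ (k+1)))) ≤
      ENNReal.ofReal ((c / (2:ℝ) ^ (k * (n:ℤ))) *
        ∫ y in annulus (δ * (1-ε) * (2:ℝ) ^ k) (2 * δ * (1+ε) * (2:ℝ) ^ k), K y)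

/-- The class 𝔇 of kernels. -/
def ClassD (K : Rn n → ℝ) : Prop := ∃ c δ ε : ℝ, ClassDWith K c δ ε

/-- The half-open dyadic cube `2^{-k}([0,1)^n + m)`. -/
def dyadicSet (k : ℤ) (m : Fin n → ℤ) : Set (Rn n) :=
  {x | ∀ i, (m i : ℝ) * (2:ℝ) ^ (-k) ≤ x i ∧ x i < ((m i : ℝ) + 1) * (2:ℝ) ^ (-k)}

/-- The center of the dyadic cube `2^{-k}([0,1)^n + m)`. -/
def dyadicCenter (k : ℤ) (m : Fin n → ℤ) : Rn n :=
  (WithLp.equiv 2 (Fin n → ℝ)).symm fun i => ((m i : ℝ) + 1 / 2) * (2:ℝ) ^ (-k)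

end VarExp

namespace St6
open Real VarExp

lemma one_le_logE {u : ℝ} (hu : 0 ≤ u) : 1 ≤ Real.log (Real.exp 1 + u) := by
  nth_rewrite 1 [show (1:ℝ) = Real.log (Real.exp 1) from (Real.log_exp 1).symm]
  exact Real.log_le_log (exp_pos 1) (by linarith)

lemma phiab_nonneg {a b u : ℝ} (hu : 0 ≤ u) : 0 ≤ phiab a b u :=
  mul_nonneg (rpow_nonneg hu a) (rpow_nonneg (by linarith [one_le_logE hu]) b)

lemma phiab_mono {a b : ℝ} (ha : 0 ≤ a) (hb : 0 ≤ b) {u v : ℝ} (hu : 0 ≤ u) (huv : u ≤ v) :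
    phiab a b u ≤ phiab a b v := by
  have h1 : 1 ≤ Real.log (Real.exp 1 + u) := one_le_logE hu
  have h2 : Real.log (Real.exp 1 + u) ≤ Real.log (Real.exp 1 + v) :=
    Real.log_le_log (by nlinarith [exp_pos 1]) (by linarith)
  exact mul_le_mul (Real.rpow_le_rpow hu huv ha)
    (Real.rpow_le_rpow (by linarith) h2 hb)
    (rpow_nonneg (by linarith) b) (rpow_nonneg (by linarith) a)

lemma t_le_phiab_max {a b t : ℝ} (ha : 1 ≤ a) (hb : 0 ≤ b) :
    t ≤ phiab a b (max 1 t) := by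
  have h1 : (1:ℝ) ≤ max 1 t := le_max_left _ _
  have h2 : max 1 t ≤ (max 1 t) ^ a := by
    nth_rewrite 1 [show max 1 t = (max 1 t) ^ (1:ℝ) from (Real.rpow_one _).symm]
    exact Real.rpow_le_rpow_of_exponent_le h1 ha
  have h3 : (1:ℝ) ≤ Real.log (Real.exp 1 + max 1 t) ^ b :=
    Real.one_le_rpow (one_le_logE (by linarith)) hb
  calc t ≤ max 1 t := le_max_right _ _
    _ ≤ (max 1 t) ^ a := h2
    _ ≤ (max 1 t) ^ a * Real.log (Real.exp 1 + max 1 t) ^ b :=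
        le_mul_of_one_le_right (rpow_nonneg (by linarith) a) h3

lemma Sset_closed {a b t : ℝ} (ha : 0 < a) :
    IsClosed {u : ℝ | 0 ≤ u ∧ t ≤ phiab a b u} := by
  have : {u : ℝ | 0 ≤ u ∧ t ≤ phiab a b u} = Ici 0 ∩ (phiab a b) ⁻¹' Ici t := by
    ext u
    simp only [Set.mem_setOf_eq, Set.mem_inter_iff, Set.mem_Ici, Set.mem_preimage]
  rw [this]
  apply ContinuousOn.preimage_isClosed_of_isClosed _ isClosed_Ici isClosed_Ici
  intro u hu
  have hu0 : (0:ℝ) ≤ u := hu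
  have hc1 : ContinuousAt (fun v : ℝ => v ^ a) u :=
    Real.continuousAt_rpow_const u a (Or.inr ha.le)
  have hlogne : Real.log (Real.exp 1 + u) ≠ 0 := by
    have := one_le_logE hu0; linarith
  have hene : Real.exp 1 + u ≠ 0 := by nlinarith [exp_pos 1]
  have hc2 : ContinuousAt (fun v : ℝ => Real.log (Real.exp 1 + v) ^ b) u := by
    have hlog : ContinuousAt (fun v : ℝ => Real.log (Real.exp 1 + v)) u :=
      (Real.continuousAt_log hene).comp (by fun_prop)
    exact hlog.rpow_const (Or.inl hlogne)
  exact ((hc1.mul hc2)).continuousWithinAt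

lemma phiInv_mem {a b t : ℝ} (ha : 1 ≤ a) (hb : 0 ≤ b) :
    0 ≤ phiInv a b t ∧ t ≤ phiab a b (phiInv a b t) := by
  have h := (Sset_closed (a := a) (b := b) (t := t) (by linarith)).csInf_mem
    ⟨max 1 t, by positivity, t_le_phiab_max ha hb⟩ ⟨0, fun x hx => hx.1⟩
  exact h

lemma phiInv_nonneg (a b t : ℝ) : 0 ≤ phiInv a b t :=
  Real.sInf_nonneg (fun x hx => hx.1)

lemma phiInv_le_max {a b t : ℝ} (ha : 1 ≤ a) (hb : 0 ≤ b) : phiInv a b t ≤ max 1 t :=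
  csInf_le ⟨0, fun x hx => hx.1⟩ ⟨by positivity, t_le_phiab_max ha hb⟩

lemma lt_phiInv {a b t u : ℝ} (ha : 1 ≤ a) (hb : 0 ≤ b) (hu : 0 ≤ u)
    (hlt : phiab a b u < t) : u < phiInv a b t := by
  rcases phiInv_mem (t := t) ha hb with ⟨h0, h1⟩
  by_contra h
  push_neg at h
  exact absurd (h1.trans (phiab_mono (by linarith) hb h0 h)) (not_le.mpr hlt)

lemma phiInv_gt_iff {a b t u : ℝ} (ha : 1 ≤ a) (hb : 0 ≤ b) (hu : 0 ≤ u) :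
    u < phiInv a b t ↔ phiab a b u < t := by
  constructor
  · intro h
    by_contra hc
    push_neg at hc
    exact absurd (csInf_le (s := {u : ℝ | 0 ≤ u ∧ t ≤ phiab a b u}) ⟨0, fun x hx => hx.1⟩ ⟨hu, hc⟩) (not_le.mpr h)
  · exact lt_phiInv ha hb hu

end St6

namespace St6
open Real VarExp

/-- The key quantitative lower bound for `phiInv`. -/
lemma phiInv_ge {qp a b t : ℝ} (hqp : 0 ≤ qp) (ha : 1 ≤ a) (hb : 0 ≤ b) (hbq : b ≤ qp)
    (ht : 0 < t) :
    (2 * (3:ℝ) ^ qp)⁻¹ * (t ^ (1/a) / Real.log (Real.exp 1 + t) ^ (b/a)) ≤ phiInv a b t := by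
  set L := Real.log (Real.exp 1 + t) with hLdef
  have hL1 : 1 ≤ L := one_le_logE ht.le
  have h3qp : (1:ℝ) ≤ (3:ℝ) ^ qp := Real.one_le_rpow (by norm_num) hqp
  set ε : ℝ := (2 * (3:ℝ) ^ qp)⁻¹ with hεdef
  have hε : 0 < ε := by positivity
  have hε1 : ε ≤ 1 := by
    rw [hεdef]
    rw [inv_le_one_iff₀]
    right; linarith
  have ha0 : 0 < a := by linarith
  have htia : 0 ≤ t ^ (1/a) := rpow_nonneg ht.le _
  have hLba : 1 ≤ L ^ (b/a) := Real.one_le_rpow hL1 (by positivity)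
  set u₀ : ℝ := ε * (t ^ (1/a) / L ^ (b/a)) with hu₀def
  have hu₀ : 0 ≤ u₀ := by positivity
  have he2 : (2:ℝ) ≤ Real.exp 1 := by
    have := Real.add_one_le_exp 1; linarith
  -- u₀ ≤ max 1 t
  have hta : t ^ (1/a) ≤ max 1 t := by
    rcases le_total t 1 with h | h
    · exact le_trans (Real.rpow_le_one ht.le h (by positivity)) (le_max_left _ _)
    · refine le_trans ?_ (le_max_right _ _)
      nth_rewrite 2 [show t = t ^ (1:ℝ) from (Real.rpow_one t).symm]
      exact Real.rpow_le_rpow_of_exponent_le h (by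
        rw [div_le_one ha0]; linarith)
  have hu₀le : u₀ ≤ max 1 t := by
    have h1 : t ^ (1/a) / L ^ (b/a) ≤ t ^ (1/a) :=
      div_le_self htia hLba
    nlinarith [le_max_left (1:ℝ) t]
  -- log (e + u₀) ≤ 3 * L
  have hlogu : Real.log (Real.exp 1 + u₀) ≤ 3 * L := by
    have h1 : Real.exp 1 + u₀ ≤ (Real.exp 1 + 1) * (Real.exp 1 + t) := by
      rcases max_cases (1:ℝ) t with ⟨hm, _⟩ | ⟨hm, _⟩ <;> nlinarith
    have h2 : Real.log (Real.exp 1 + u₀) ≤ Real.log ((Real.exp 1 + 1) * (Real.exp 1 + t)) :=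
      Real.log_le_log (by positivity) h1
    have h3 : Real.log ((Real.exp 1 + 1) * (Real.exp 1 + t)) =
        Real.log (Real.exp 1 + 1) + L := by
      rw [Real.log_mul (by positivity) (by positivity), hLdef]
    have h4 : Real.log (Real.exp 1 + 1) ≤ 2 := by
      have : Real.exp 1 + 1 ≤ Real.exp 1 * Real.exp 1 := by nlinarith
      calc Real.log (Real.exp 1 + 1) ≤ Real.log (Real.exp 1 * Real.exp 1) :=
            Real.log_le_log (by positivity) this
        _ = 2 := by rw [Real.log_mul (by positivity) (by positivity), Real.log_exp]; norm_num
    linarith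
  -- main estimate : phiab a b u₀ < t
  have hmain : phiab a b u₀ < t := by
    have hLb : (0:ℝ) < L ^ b := by positivity
    have hu₀a : u₀ ^ a = ε ^ a * t / L ^ b := by
      rw [hu₀def, Real.mul_rpow hε.le (by positivity), Real.div_rpow htia (by positivity),
        ← Real.rpow_mul ht.le, ← Real.rpow_mul (by linarith : (0:ℝ) ≤ L),
        one_div_mul_cancel ha0.ne', div_mul_cancel₀ _ ha0.ne', Real.rpow_one]
      ring
    have hlog0 : 0 ≤ Real.log (Real.exp 1 + u₀) := by linarith [one_le_logE hu₀]
    have hlogb : Real.log (Real.exp 1 + u₀) ^ b ≤ 3 ^ qp * L ^ b := by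
      calc Real.log (Real.exp 1 + u₀) ^ b ≤ (3 * L) ^ b :=
            Real.rpow_le_rpow hlog0 hlogu hb
        _ = 3 ^ b * L ^ b := Real.mul_rpow (by norm_num) (by linarith)
        _ ≤ 3 ^ qp * L ^ b := by
            have : (3:ℝ) ^ b ≤ 3 ^ qp := Real.rpow_le_rpow_of_exponent_le (by norm_num) hbq
            nlinarith
    have hεa : ε ^ a ≤ ε := by
      calc ε ^ a ≤ ε ^ (1:ℝ) := Real.rpow_le_rpow_of_exponent_ge hε hε1 ha
        _ = ε := Real.rpow_one ε
    have hεa0 : 0 ≤ ε ^ a := rpow_nonneg hε.le a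
    calc phiab a b u₀ = u₀ ^ a * Real.log (Real.exp 1 + u₀) ^ b := rfl
      _ ≤ (ε ^ a * t / L ^ b) * (3 ^ qp * L ^ b) := by
          rw [hu₀a]
          apply mul_le_mul_of_nonneg_left hlogb
          positivity
      _ = ε ^ a * 3 ^ qp * t := by field_simp
      _ ≤ ε * 3 ^ qp * t :=
          mul_le_mul_of_nonneg_right (mul_le_mul_of_nonneg_right hεa (by positivity)) ht.le
      _ = t / 2 := by rw [hεdef]; field_simp
      _ < t := by linarith
  exact (lt_phiInv ha hb hu₀ hmain).le

/-- Measurability of `x ↦ phiInv (P x) (Q x) t`. -/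
lemma measurable_phiInv {n : ℕ} {P Q : Rn n → ℝ} (hP : Measurable P) (hQ : Measurable Q)
    (hP1 : ∀ x, 1 ≤ P x) (hQ0 : ∀ x, 0 ≤ Q x) {t : ℝ} (ht : 0 < t) :
    Measurable fun x => phiInv (P x) (Q x) t := by
  apply measurable_of_Ioi
  intro u
  rcases lt_or_ge u 0 with hu | hu
  · have : (fun x => phiInv (P x) (Q x) t) ⁻¹' Set.Ioi u = Set.univ := by
      ext x
      simp only [Set.mem_preimage, Set.mem_Ioi, Set.mem_univ, iff_true]
      exact lt_of_lt_of_le hu (phiInv_nonneg _ _ _)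
    rw [this]; exact MeasurableSet.univ
  · have hkey : (fun x => phiInv (P x) (Q x) t) ⁻¹' Set.Ioi u
        = {x | phiab (P x) (Q x) u < t} := by
      ext x
      simp only [Set.mem_preimage, Set.mem_Ioi, Set.mem_setOf_eq]
      exact phiInv_gt_iff (hP1 x) (hQ0 x) hu
    rw [hkey]
    rcases eq_or_lt_of_le hu with hu0 | hu0
    · have : {x | phiab (P x) (Q x) u < t} = Set.univ := by
        ext x
        simp only [Set.mem_setOf_eq, Set.mem_univ, iff_true]
        have : phiab (P x) (Q x) u = 0 := by
          rw [phiab, ← hu0, Real.zero_rpow (by linarith [hP1 x] : P x ≠ 0), zero_mul]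
        linarith
      rw [this]; exact MeasurableSet.univ
    · have hB : 0 < Real.log (Real.exp 1 + u) := by linarith [one_le_logE hu]
      have heq : ∀ x, phiab (P x) (Q x) u =
          Real.exp (Real.log u * P x) *
            Real.exp (Real.log (Real.log (Real.exp 1 + u)) * Q x) := by
        intro x
        rw [phiab, Real.rpow_def_of_pos hu0, Real.rpow_def_of_pos hB]
      have : {x | phiab (P x) (Q x) u < t} =
          {x | Real.exp (Real.log u * P x) *
            Real.exp (Real.log (Real.log (Real.exp 1 + u)) * Q x) < t} := by
        ext x; rw [Set.mem_setOf_eq, Set.mem_setOf_eq, heq x]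
      rw [this]
      exact measurableSet_lt (((measurable_const.mul hP).exp).mul
        ((measurable_const.mul hQ).exp)) measurable_const

end St6

namespace St6
open Real VarExp MeasureTheory

lemma coord_abs_le_norm {n : ℕ} (y : Rn n) (i : Fin n) : |y i| ≤ ‖y‖ := by
  rw [EuclideanSpace.norm_eq]
  have h1 : |y i| ^ 2 ≤ ∑ j, ‖y j‖ ^ 2 := by
    have := Finset.single_le_sum (f := fun j => ‖y j‖ ^ 2)
      (fun j _ => sq_nonneg _) (Finset.mem_univ i)
    simpa [Real.norm_eq_abs] using this
  have h2 : |y i| ^ 2 = y i ^ 2 := sq_abs _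
  calc |y i| = Real.sqrt (y i ^ 2) := (Real.sqrt_sq_eq_abs _).symm
    _ = Real.sqrt (|y i| ^ 2) := by rw [h2]
    _ ≤ Real.sqrt (∑ j, ‖y j‖ ^ 2) := Real.sqrt_le_sqrt h1

lemma ball_subset_cube {n : ℕ} (c : Rn n) (l : ℝ) :
    Metric.ball c (l/2) ⊆ cubeSet c l := by
  intro x hx i
  rw [Metric.mem_ball, dist_eq_norm] at hx
  have h := coord_abs_le_norm (x - c) i
  have h2 : (x - c) i = x i - c i := by simp
  rw [h2] at h; linarith

lemma cube_subset_closedBall {n : ℕ} (c : Rn n) (l : ℝ) (hl : 0 < l) :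
    cubeSet c l ⊆ Metric.closedBall c (Real.sqrt n * (l/2)) := by
  intro x hx
  rw [Metric.mem_closedBall, dist_eq_norm, EuclideanSpace.norm_eq]
  have hsum : ∑ j, ‖(x - c) j‖ ^ 2 ≤ (n : ℝ) * (l/2)^2 := by
    calc (∑ j, ‖(x - c) j‖ ^ 2) ≤ ∑ _j : Fin n, (l/2)^2 := by
          apply Finset.sum_le_sum
          intro j _
          have h := hx j
          have h2 : ‖(x - c) j‖ = |x j - c j| := by simp [Real.norm_eq_abs]
          rw [h2]
          exact pow_le_pow_left₀ (abs_nonneg _) h 2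
      _ = (n : ℝ) * (l/2)^2 := by
          rw [Finset.sum_const, Finset.card_univ, Fintype.card_fin, nsmul_eq_mul]
  calc Real.sqrt (∑ j, ‖(x - c) j‖ ^ 2) ≤ Real.sqrt ((n : ℝ) * (l/2)^2) :=
        Real.sqrt_le_sqrt hsum
    _ = Real.sqrt n * (l/2) := by
        rw [Real.sqrt_mul (Nat.cast_nonneg n), Real.sqrt_sq (by linarith)]

lemma cubeSet_closed {n : ℕ} (c : Rn n) (l : ℝ) : IsClosed (cubeSet c l) := by
  have heq : cubeSet c l = ⋂ i, {x : Rn n | |x i - c i| ≤ l/2} := by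
    ext x; simp [cubeSet, Set.mem_iInter]
  rw [heq]
  refine isClosed_iInter fun i => ?_
  have hc : Continuous fun x : Rn n => |x i - c i| := by
    have h1 : Continuous fun x : Rn n => x i := by
      exact (EuclideanSpace.proj (𝕜 := ℝ) i).continuous
    fun_prop
  exact isClosed_le hc continuous_const

lemma integrable_of_bound {n : ℕ} {μ : Measure (Rn n)} [IsFiniteMeasure μ] {f : Rn n → ℝ}
    (hf : Measurable f) (M : ℝ) (h : ∀ x, ‖f x‖ ≤ M) : Integrable f μ :=
  (integrable_const M).mono' hf.aestronglyMeasurable (Filter.Eventually.of_forall h)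

lemma average_mono' {n : ℕ} {μ : Measure (Rn n)} [IsFiniteMeasure μ] {f g : Rn n → ℝ}
    (hf : Integrable f μ) (hg : Integrable g μ) (h : ∀ x, f x ≤ g x) :
    ⨍ x, f x ∂μ ≤ ⨍ x, g x ∂μ := by
  rw [average_eq, average_eq, smul_eq_mul, smul_eq_mul]
  exact mul_le_mul_of_nonneg_left (integral_mono hf hg h) (by positivity)

end St6

namespace St6
open VarExp

lemma main (n : ℕ) (pm pp qp : ℝ) (hpm : 1 < pm) (hppm : pm ≤ pp) (hqp : 0 ≤ qp) :
    ∃ C : ℝ, 0 < C ∧ ∀ p q : Rn n → ℝ, Measurable p → Measurable q →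
      (∀ x, pm ≤ p x ∧ p x ≤ pp) → (∀ x, 0 ≤ q x ∧ q x ≤ qp) →
      ∀ (c : Rn n) (l : ℝ), 0 < l → ∀ t : ℝ, 0 ≤ t →
        t ≤ C * (⨍ x in cubeSet c l, phiInv (p x) (q x) t) *
          ⨍ x in cubeSet c l, Real.log (Real.exp 1 + t) ^ q x * phiInv (conj (p x)) (q x) t := by
  have h3qp : (1:ℝ) ≤ (3:ℝ) ^ qp := Real.one_le_rpow (by norm_num) hqp
  set ε : ℝ := (2 * (3:ℝ) ^ qp)⁻¹ with hεdef
  have hε : 0 < ε := by positivity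
  refine ⟨ε⁻¹ ^ 2, by positivity, ?_⟩
  intro p q hp hq hpb hqb c l hl t ht0
  have hp1 : ∀ x, 1 ≤ p x := fun x => le_trans hpm.le (hpb x).1
  have hpgt : ∀ x, 1 < p x := fun x => lt_of_lt_of_le hpm (hpb x).1
  have hq0 : ∀ x, 0 ≤ q x := fun x => (hqb x).1
  -- measure-theoretic setup
  set s : Set (Rn n) := cubeSet c l with hsdef
  have hpos : 0 < MeasureTheory.volume s :=
    lt_of_lt_of_le (Metric.measure_ball_pos MeasureTheory.volume c
      (by linarith : (0:ℝ) < l/2)) (MeasureTheory.measure_mono (ball_subset_cube c l))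
  have hfin : MeasureTheory.volume s < ⊤ :=
    lt_of_le_of_lt (MeasureTheory.measure_mono (cube_subset_closedBall c l hl))
      MeasureTheory.measure_closedBall_lt_top
  set μ := MeasureTheory.volume.restrict s with hμdef
  haveI : MeasureTheory.IsFiniteMeasure μ :=
    ⟨by rw [hμdef, MeasureTheory.Measure.restrict_apply_univ]; exact hfin⟩
  haveI : NeZero μ :=
    ⟨fun h => absurd (MeasureTheory.Measure.restrict_eq_zero.mp h) hpos.ne'⟩
  have hμuniv : μ Set.univ = MeasureTheory.volume s := by
    rw [hμdef, MeasureTheory.Measure.restrict_apply_univ]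
  -- nonnegativity of the two averages
  have havg1nn : 0 ≤ ⨍ x, phiInv (p x) (q x) t ∂μ := by
    rw [MeasureTheory.average_eq, smul_eq_mul]
    exact mul_nonneg (by positivity)
      (MeasureTheory.integral_nonneg fun x => phiInv_nonneg _ _ _)
  have havg2nn : 0 ≤ ⨍ x, Real.log (Real.exp 1 + t) ^ q x
      * phiInv (conj (p x)) (q x) t ∂μ := by
    rw [MeasureTheory.average_eq, smul_eq_mul]
    refine mul_nonneg (by positivity) (MeasureTheory.integral_nonneg fun x => mul_nonneg
      (Real.rpow_nonneg (by linarith [one_le_logE ht0]) _) (phiInv_nonneg _ _ _))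
  rcases eq_or_lt_of_le ht0 with ht | ht
  · subst ht
    exact mul_nonneg (mul_nonneg (by positivity) havg1nn) havg2nn
  -- main case : 0 < t
  have hL1 : 1 ≤ Real.log (Real.exp 1 + t) := one_le_logE ht0
  have hL0 : (0:ℝ) < Real.log (Real.exp 1 + t) := by linarith
  set U : Rn n → ℝ := fun x =>
    Real.log t * (1 / p x) - Real.log (Real.log (Real.exp 1 + t)) * (q x / p x) with hUdef
  set V : Rn n → ℝ := fun x =>
    Real.log t * (1 - 1 / p x) + Real.log (Real.log (Real.exp 1 + t)) * (q x / p x) with hVdef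
  have hlL0 : 0 ≤ Real.log (Real.log (Real.exp 1 + t)) := Real.log_nonneg hL1
  -- conjugate exponent facts
  have hconj1 : ∀ x, 1 ≤ conj (p x) := by
    intro x
    rw [conj, le_div_iff₀ (by linarith [hpgt x])]
    linarith [hpgt x]
  have hconjinv : ∀ x, 1 / conj (p x) = 1 - 1 / p x := by
    intro x
    have h1 := hpgt x
    rw [conj]
    field_simp
  -- key pointwise lower bounds
  have key1 : ∀ x, ε * Real.exp (U x) ≤ phiInv (p x) (q x) t := by
    intro x
    have h := phiInv_ge hqp (hp1 x) (hq0 x) (hqb x).2 ht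
    rw [← hεdef] at h
    have hid : t ^ (1 / p x) / Real.log (Real.exp 1 + t) ^ (q x / p x) = Real.exp (U x) := by
      rw [hUdef, Real.rpow_def_of_pos ht, Real.rpow_def_of_pos hL0, ← Real.exp_sub]
    rwa [hid] at h
  have key2 : ∀ x, ε * Real.exp (V x) ≤
      Real.log (Real.exp 1 + t) ^ q x * phiInv (conj (p x)) (q x) t := by
    intro x
    have h := phiInv_ge hqp (hconj1 x) (hq0 x) (hqb x).2 ht
    rw [← hεdef] at h
    have h' := mul_le_mul_of_nonneg_left h
      (Real.rpow_nonneg hL0.le (q x) :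
        (0:ℝ) ≤ Real.log (Real.exp 1 + t) ^ q x)
    refine le_trans (le_of_eq ?_) h'
    have h2 : q x / conj (p x) = q x * (1 - 1 / p x) := by
      rw [div_eq_mul_one_div, hconjinv x]
    rw [h2, hconjinv x, Real.rpow_def_of_pos hL0, Real.rpow_def_of_pos ht,
      Real.rpow_def_of_pos hL0, hVdef, ← Real.exp_sub, mul_left_comm, ← Real.exp_add]
    congr 2
    ring
  -- integrability
  have hUmeas : Measurable U := by
    rw [hUdef]
    exact (measurable_const.mul (measurable_const.div hp)).sub
      (measurable_const.mul (hq.div hp))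
  have hVmeas : Measurable V := by
    rw [hVdef]
    exact (measurable_const.mul (measurable_const.sub (measurable_const.div hp))).add
      (measurable_const.mul (hq.div hp))
  have hUVbound : ∀ x, ‖U x‖ ≤ |Real.log t| + Real.log (Real.log (Real.exp 1 + t)) * qp
      ∧ ‖V x‖ ≤ |Real.log t| + Real.log (Real.log (Real.exp 1 + t)) * qp := by
    intro x
    have hpx := hpgt x
    have hipx0 : 0 < 1 / p x := by positivity
    have hipx1 : 1 / p x ≤ 1 := by rw [div_le_one (by linarith)]; linarith
    have hqpx0 : 0 ≤ q x / p x := div_nonneg (hq0 x) (by linarith)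
    have hqpx : q x / p x ≤ qp := le_trans
      (div_le_self (hq0 x) (by linarith)) (hqb x).2
    have h1 : |Real.log t * (1 / p x)| ≤ |Real.log t| := by
      rw [abs_mul, abs_of_pos hipx0]
      nlinarith [abs_nonneg (Real.log t)]
    have h2 : |Real.log (Real.log (Real.exp 1 + t)) * (q x / p x)|
        ≤ Real.log (Real.log (Real.exp 1 + t)) * qp := by
      rw [abs_mul, abs_of_nonneg hlL0, abs_of_nonneg hqpx0]
      nlinarith
    have h3 : |Real.log t * (1 - 1 / p x)| ≤ |Real.log t| := by
      rw [abs_mul]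
      have : |1 - 1 / p x| ≤ 1 := by rw [abs_of_nonneg (by linarith)]; linarith
      nlinarith [abs_nonneg (Real.log t)]
    constructor
    · rw [hUdef]
      simp only [Real.norm_eq_abs]
      calc |Real.log t * (1 / p x) - Real.log (Real.log (Real.exp 1 + t)) * (q x / p x)|
          ≤ |Real.log t * (1 / p x)| + |Real.log (Real.log (Real.exp 1 + t)) * (q x / p x)| :=
            abs_sub _ _
        _ ≤ _ := by linarith
    · rw [hVdef]
      simp only [Real.norm_eq_abs]
      calc |Real.log t * (1 - 1 / p x) + Real.log (Real.log (Real.exp 1 + t)) * (q x / p x)|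
          ≤ |Real.log t * (1 - 1 / p x)| + |Real.log (Real.log (Real.exp 1 + t)) * (q x / p x)| :=
            abs_add_le _ _
        _ ≤ _ := by linarith
  set MB : ℝ := |Real.log t| + Real.log (Real.log (Real.exp 1 + t)) * qp with hMBdef
  have hUint : MeasureTheory.Integrable U μ :=
    integrable_of_bound hUmeas MB (fun x => (hUVbound x).1)
  have hVint : MeasureTheory.Integrable V μ :=
    integrable_of_bound hVmeas MB (fun x => (hUVbound x).2)
  have hexpnorm : ∀ (W : Rn n → ℝ), (∀ x, ‖W x‖ ≤ MB) →
      ∀ x, ‖Real.exp (W x)‖ ≤ Real.exp MB := by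
    intro W hW x
    rw [Real.norm_eq_abs, abs_of_pos (Real.exp_pos _)]
    exact Real.exp_le_exp.2 (le_trans (le_abs_self _) ((Real.norm_eq_abs (W x)) ▸ hW x))
  have hexpUint : MeasureTheory.Integrable (Real.exp ∘ U) μ :=
    integrable_of_bound hUmeas.exp (Real.exp MB) (hexpnorm U (fun x => (hUVbound x).1))
  have hexpVint : MeasureTheory.Integrable (Real.exp ∘ V) μ :=
    integrable_of_bound hVmeas.exp (Real.exp MB) (hexpnorm V (fun x => (hUVbound x).2))
  -- integrability of the two integrands
  have hf1meas : Measurable fun x => phiInv (p x) (q x) t :=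
    measurable_phiInv hp hq hp1 hq0 ht
  have hf1int : MeasureTheory.Integrable (fun x => phiInv (p x) (q x) t) μ := by
    refine integrable_of_bound hf1meas (max 1 t) (fun x => ?_)
    rw [Real.norm_eq_abs, abs_of_nonneg (phiInv_nonneg _ _ _)]
    exact phiInv_le_max (hp1 x) (hq0 x)
  have hconjmeas : Measurable fun x => conj (p x) := by
    simp only [conj]
    exact hp.div (hp.sub measurable_const)
  have hLq : (fun x => Real.log (Real.exp 1 + t) ^ q x)
      = fun x => Real.exp (Real.log (Real.log (Real.exp 1 + t)) * q x) :=
    funext fun x => Real.rpow_def_of_pos hL0 _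
  have hf2meas : Measurable fun x =>
      Real.log (Real.exp 1 + t) ^ q x * phiInv (conj (p x)) (q x) t := by
    apply Measurable.mul
    · rw [hLq]; exact (measurable_const.mul hq).exp
    · exact measurable_phiInv hconjmeas hq hconj1 hq0 ht
  have hf2int : MeasureTheory.Integrable
      (fun x => Real.log (Real.exp 1 + t) ^ q x * phiInv (conj (p x)) (q x) t) μ := by
    refine integrable_of_bound hf2meas
      (Real.log (Real.exp 1 + t) ^ qp * max 1 t) (fun x => ?_)
    have h1 : (0:ℝ) ≤ Real.log (Real.exp 1 + t) ^ q x := Real.rpow_nonneg hL0.le _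
    have h2 : Real.log (Real.exp 1 + t) ^ q x ≤ Real.log (Real.exp 1 + t) ^ qp :=
      Real.rpow_le_rpow_of_exponent_le hL1 (hqb x).2
    rw [Real.norm_eq_abs, abs_of_nonneg (mul_nonneg h1 (phiInv_nonneg _ _ _))]
    exact mul_le_mul h2 (phiInv_le_max (hconj1 x) (hq0 x)) (phiInv_nonneg _ _ _)
      (by positivity)
  -- Jensen's inequality
  have jU : Real.exp (⨍ x, U x ∂μ) ≤ ⨍ x, Real.exp (U x) ∂μ :=
    convexOn_exp.map_average_le Real.continuous_exp.continuousOn isClosed_univ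
      (Filter.Eventually.of_forall fun x => Set.mem_univ _) hUint hexpUint
  have jV : Real.exp (⨍ x, V x ∂μ) ≤ ⨍ x, Real.exp (V x) ∂μ :=
    convexOn_exp.map_average_le Real.continuous_exp.continuousOn isClosed_univ
      (Filter.Eventually.of_forall fun x => Set.mem_univ _) hVint hexpVint
  -- lower bounds for the two averages
  have hA1 : ε * Real.exp (⨍ x, U x ∂μ) ≤ ⨍ x, phiInv (p x) (q x) t ∂μ := by
    calc ε * Real.exp (⨍ x, U x ∂μ) ≤ ε * ⨍ x, Real.exp (U x) ∂μ :=
          mul_le_mul_of_nonneg_left jU hε.le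
      _ = ⨍ x, ε * Real.exp (U x) ∂μ := by
          rw [MeasureTheory.average_eq, MeasureTheory.average_eq, smul_eq_mul, smul_eq_mul,
            MeasureTheory.integral_const_mul]
          ring
      _ ≤ ⨍ x, phiInv (p x) (q x) t ∂μ :=
          average_mono' (hexpUint.const_mul ε) hf1int key1
  have hA2 : ε * Real.exp (⨍ x, V x ∂μ) ≤
      ⨍ x, Real.log (Real.exp 1 + t) ^ q x * phiInv (conj (p x)) (q x) t ∂μ := by
    calc ε * Real.exp (⨍ x, V x ∂μ) ≤ ε * ⨍ x, Real.exp (V x) ∂μ :=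
          mul_le_mul_of_nonneg_left jV hε.le
      _ = ⨍ x, ε * Real.exp (V x) ∂μ := by
          rw [MeasureTheory.average_eq, MeasureTheory.average_eq, smul_eq_mul, smul_eq_mul,
            MeasureTheory.integral_const_mul]
          ring
      _ ≤ _ := average_mono' (hexpVint.const_mul ε) hf2int key2
  -- the sum of the averages of U and V is log t
  have hsum : (⨍ x, U x ∂μ) + (⨍ x, V x ∂μ) = Real.log t := by
    have htr : (0:ℝ) < (μ Set.univ).toReal := by
      rw [hμuniv]
      exact ENNReal.toReal_pos hpos.ne' hfin.ne
    have hUV : (fun x => U x + V x) = fun _ => Real.log t := by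
      funext x
      rw [hUdef, hVdef]
      ring
    rw [MeasureTheory.average_eq, MeasureTheory.average_eq, smul_eq_mul, smul_eq_mul,
      ← mul_add, ← MeasureTheory.integral_add hUint hVint, hUV,
      MeasureTheory.integral_const, smul_eq_mul]
    have htr' : μ.real Set.univ ≠ 0 := htr.ne'
    field_simp
  -- conclusion
  have hfinal : t = ε⁻¹ ^ 2 * (ε * Real.exp (⨍ x, U x ∂μ)) * (ε * Real.exp (⨍ x, V x ∂μ)) := by
    have h1 : ε⁻¹ ^ 2 * (ε * Real.exp (⨍ x, U x ∂μ)) * (ε * Real.exp (⨍ x, V x ∂μ))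
        = Real.exp (⨍ x, U x ∂μ) * Real.exp (⨍ x, V x ∂μ) := by
      field_simp
    rw [h1, ← Real.exp_add, hsum, Real.exp_log ht]
  calc t = ε⁻¹ ^ 2 * (ε * Real.exp (⨍ x, U x ∂μ)) * (ε * Real.exp (⨍ x, V x ∂μ)) := hfinal
    _ ≤ _ := by
        refine mul_le_mul (mul_le_mul_of_nonneg_left hA1 (by positivity)) hA2 (by positivity) ?_
        exact mul_nonneg (by positivity) havg1nn

end St6

open VarExp in
/-- `t ≲ (⨍_Q φ^{-1}_{p(x),q(x)}(t) dx) (⨍_Q (log(e+t))^{q(x)} φ^{-1}_{p'(x),q(x)}(t) dx)`. -/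
theorem statement6 (n : ℕ) (pm pp qp : ℝ) (hpm : 1 < pm) (hppm : pm ≤ pp) (hqp : 0 ≤ qp) :
    ∃ C : ℝ, 0 < C ∧ ∀ p q : Rn n → ℝ, Measurable p → Measurable q →
      (∀ x, pm ≤ p x ∧ p x ≤ pp) → (∀ x, 0 ≤ q x ∧ q x ≤ qp) →
      ∀ (c : Rn n) (l : ℝ), 0 < l → ∀ t : ℝ, 0 ≤ t →
        t ≤ C * (⨍ x in cubeSet c l, phiInv (p x) (q x) t) *
          ⨍ x in cubeSet c l, Real.log (Real.exp 1 + t) ^ q x * phiInv (conj (p x)) (q x) t :=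
  St6.main n pm pp qp hpm hppm hqp
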